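/- Let (Y, M) be the Markov-modulated random walk on (ℤ × ℤ₊) × 𝓜 with increments (−1,0), (1,1), (0,−1) occurring with probabilities λ(M_k)P(M_k,M_k), μ₁(M_k)P(M_k,M_k), μ₂(M_k)P(M_k,M_k) (and increment (0,0) with probability 1 − P(M_k,M_k), in which case M jumps according to P). For (β, α, d) with A(β,α)d = d, where A(β,α) is the matrix with off-diagonal entries P(m₁,m₂) and diagonal entries P(m,m)(λ(m)/β + μ₁(m)α + μ₂(m)β/α), the function h(y,m) = β^{y(1)−y(2)} α^{y(2)} d(m) satisfies E_{(y,m)}[h(Y₁, M₁)] = h(y,m) for all y ∈ ℤ × ℤ₊ with y(2) > 0. -/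

import Mathlib

/-- The characteristic matrix `A(β,α)` of the Markov-modulated tandem walk: off-diagonal
entries `P(m₁,m₂)`, diagonal entries `P(m,m)(λ(m)/β + μ₁(m)α + μ₂(m)β/α)`. -/
noncomputable def charMatC {M : Type*} [Fintype M] [DecidableEq M]
    (P : Matrix M M ℝ) (lam mu1 mu2 : M → ℝ) (β α : ℂ) : Matrix M M ℂ :=
  fun m1 m2 => if m1 = m2
    then (P m1 m1 : ℂ) * ((lam m1 : ℂ) / β + (mu1 m1 : ℂ) * α + (mu2 m1 : ℂ) * β / α)
    else (P m1 m2 : ℂ)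

/-- One-step expectation `E_{(y,m)}[h(Y₁,M₁)]` for the Markov-modulated walk `(Y,M)` on
`ℤ × ℤ₊`: with probability `P(m,m')` (`m' ≠ m`) the modulating chain jumps and `Y` stays
put; with probability `P(m,m)λ(m)`, `P(m,m)μ₁(m)`, `P(m,m)μ₂(m)` the increments
`(−1,0)`, `(1,1)`, `(0,−1)` occur, the last one being suppressed on the boundary
`y(2) = 0`. -/
noncomputable def stepExpC {M : Type*} [Fintype M] [DecidableEq M]
    (P : Matrix M M ℝ) (lam mu1 mu2 : M → ℝ)
    (h : ℤ × ℤ → M → ℂ) (y : ℤ × ℤ) (m : M) : ℂ :=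
  (∑ m' : M, if m' = m then 0 else (P m m' : ℂ) * h y m') +
    (P m m : ℂ) * ((lam m : ℂ) * h (y.1 - 1, y.2) m
      + (mu1 m : ℂ) * h (y.1 + 1, y.2 + 1) m
      + (mu2 m : ℂ) * h (if y.2 = 0 then y else (y.1, y.2 - 1)) m)

/-- The exponential function `h(y,m) = β^{y(1)−y(2)} α^{y(2)} d(m)`. -/
noncomputable def expFun {M : Type*} (β α : ℂ) (d : M → ℂ) (y : ℤ × ℤ) (m : M) : ℂ :=
  β ^ (y.1 - y.2) * α ^ y.2 * d m

/-- If `(β, α, d)` satisfies the characteristic equation `A(β,α) d = d`, then the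
function `h(y,m) = β^{y(1)−y(2)} α^{y(2)} d(m)` is `(Y,M)`-harmonic at every interior
point `y` with `y(2) > 0`: `E_{(y,m)}[h(Y₁,M₁)] = h(y,m)`. -/
theorem interior_harmonic {M : Type*} [Fintype M] [DecidableEq M] [Nonempty M]
    (P : Matrix M M ℝ)
    (hP0 : ∀ m1 m2, 0 ≤ P m1 m2) (hP1 : ∀ m1, ∑ m2, P m1 m2 = 1)
    (hprim : ∃ k : ℕ, ∀ m1 m2, 0 < (P ^ k) m1 m2)
    (lam mu1 mu2 : M → ℝ)
    (hrates : ∀ m, 0 < lam m ∧ 0 < mu1 m ∧ 0 < mu2 m ∧ lam m + mu1 m + mu2 m = 1)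
    (β α : ℂ) (hβ : β ≠ 0) (hα : α ≠ 0)
    (d : M → ℂ) (hd : d ≠ 0)
    (heig : (charMatC P lam mu1 mu2 β α).mulVec d = d) :
    ∀ (y : ℤ × ℤ) (m : M), 0 < y.2 →
      stepExpC P lam mu1 mu2 (expFun β α d) y m = expFun β α d y m := by
  intro y m hy
  have hy2 : y.2 ≠ 0 := by omega
  have key : (∑ m' : M, charMatC P lam mu1 mu2 β α m m' * d m') = d m := by
    have := congrFun heig m
    simpa [Matrix.mulVec, dotProduct] using this
  have e1 : β ^ (y.1 - 1 - y.2) = β ^ (y.1 - y.2) * β⁻¹ := by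
    rw [show y.1 - 1 - y.2 = (y.1 - y.2) - 1 by ring, zpow_sub_one₀ hβ]
  have e2 : β ^ (y.1 + 1 - (y.2 + 1)) = β ^ (y.1 - y.2) := by ring_nf
  have e3 : α ^ (y.2 + 1) = α ^ y.2 * α := by rw [zpow_add_one₀ hα]
  have e4 : β ^ (y.1 - (y.2 - 1)) = β ^ (y.1 - y.2) * β := by
    rw [show y.1 - (y.2 - 1) = (y.1 - y.2) + 1 by ring, zpow_add_one₀ hβ]
  have e5 : α ^ (y.2 - 1) = α ^ y.2 * α⁻¹ := by rw [zpow_sub_one₀ hα]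
  have hsum : (∑ m' : M, if m' = m then 0 else (P m m' : ℂ) * expFun β α d y m')
      = β ^ (y.1 - y.2) * α ^ y.2 *
        ((∑ m' : M, charMatC P lam mu1 mu2 β α m m' * d m')
          - charMatC P lam mu1 mu2 β α m m * d m) := by
    rw [mul_sub, Finset.mul_sum]
    rw [show (β ^ (y.1 - y.2) * α ^ y.2 * (charMatC P lam mu1 mu2 β α m m * d m))
        = ∑ m' : M, if m' = m then β ^ (y.1 - y.2) * α ^ y.2 *
            (charMatC P lam mu1 mu2 β α m m * d m) else 0 by
      rw [Finset.sum_ite_eq' Finset.univ m]; simp]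
    rw [← Finset.sum_sub_distrib]
    refine Finset.sum_congr rfl fun m' _ => ?_
    by_cases h : m' = m
    · simp [h]
    · simp [h, charMatC, Ne.symm h, expFun]
      ring
  rw [stepExpC, hsum, key, if_neg hy2]
  simp only [expFun, e1, e2, e3, e4, e5, charMatC, if_pos rfl, ↓reduceIte]
  field_simp
  ring
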